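/- Let k be a field and let D = k[X₁, X₂, X₃, …] be the polynomial ring in countably infinitely many variables over k. Then D is not generically Egyptian; that is, for every nonzero f ∈ D, the localization D[1/f] is not Egyptian. -/

import Mathlib

universe u

/-- A commutative ring `D` is *Egyptian* if every nonzero `d : D` is a sum of reciprocals
`d = 1/d₁ + ⋯ + 1/dₙ` of finitely many pairwise distinct nonzero elements `dᵢ` of `D`, the
equality holding in any field in which `D` embeds.  (For an integral domain `D` this is
equivalent to the usual definition, in which the equality is required in the fraction field
of `D`: such an equality holds in one field containing `D` iff it holds in all of them.) -/
def IsEgyptian (D : Type u) [CommRing D] : Prop :=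
  ∀ d : D, d ≠ 0 → ∃ s : Finset D, (∀ i ∈ s, i ≠ 0) ∧
    ∀ (K : Type u) [Field K] (φ : D →+* K), Function.Injective φ →
      φ d = ∑ i ∈ s, (φ i)⁻¹

/-- A domain `D` is *generically Egyptian* if `D[1/f]` is Egyptian for some nonzero `f : D`. -/
def IsGenericallyEgyptian (D : Type u) [CommRing D] : Prop :=
  ∃ f : D, f ≠ 0 ∧ IsEgyptian (Localization.Away f)

/-- A domain `D` is *locally Egyptian* if there is a finite set of generators of the unit
ideal of `D` such that inverting any one of them yields an Egyptian ring. -/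
def IsLocallyEgyptian (D : Type u) [CommRing D] : Prop :=
  ∃ s : Finset D, Ideal.span (s : Set D) = ⊤ ∧
    ∀ f ∈ s, IsEgyptian (Localization.Away f)

open MvPolynomial in
lemma psi_const {R : Type u} [CommSemiring R] (e : ℕ ≃ Option ℕ) (n : ℕ) (hen : e n = none)
    (p : MvPolynomial ℕ R) (hp : n ∉ p.vars) :
    ∃ c, (optionEquivLeft R ℕ) (rename e p) = Polynomial.C c := by
  classical
  have hinj : Function.Injective (Subtype.val : {m : ℕ // m ≠ n} → ℕ) := Subtype.val_injective
  have hsub : (↑p.vars : Set ℕ) ⊆ Set.range (Subtype.val : {m : ℕ // m ≠ n} → ℕ) := by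
    rw [Subtype.range_coe_subtype]
    intro m hm
    rintro rfl
    exact hp (by exact_mod_cast hm)
  obtain ⟨q, rfl⟩ := p.exists_rename_eq_of_vars_subset_range _ hinj hsub
  have hsome : ∀ m : {m : ℕ // m ≠ n}, (e (m : ℕ)).isSome := by
    rintro ⟨m, hm⟩
    cases he : e m with
    | none => exact absurd (e.injective (he.trans hen.symm)) hm
    | some j => rfl
  set g : {m : ℕ // m ≠ n} → ℕ := fun m => (e (m : ℕ)).get (hsome m) with hg
  have hkey : (optionEquivLeft R ℕ).toAlgHom.comp ((rename e).comp (rename Subtype.val))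
      = (Polynomial.CAlgHom).comp (rename g) := by
    apply MvPolynomial.algHom_ext
    intro m
    simp only [AlgHom.comp_apply, rename_X, AlgEquiv.toAlgHom_eq_coe, AlgHom.coe_coe,
      Polynomial.CAlgHom]
    have : e (m : ℕ) = some (g m) := (Option.some_get (hsome m)).symm
    rw [this, AlgEquiv.toAlgHom_apply, optionEquivLeft_X_some]
    rfl
  refine ⟨rename g q, ?_⟩
  have := congrArg (fun F => F q) hkey
  simpa [Polynomial.CAlgHom] using this

open MvPolynomial

/-- If `k` is a field and `D = k[X₁, X₂, X₃, …]` is a polynomial ring in countably many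
variables over `k`, then `D` is not generically Egyptian: there is no nonzero `f : D` such
that `D[1/f]` is Egyptian. -/
theorem statement19 (k : Type u) [Field k] :
    ¬ IsGenericallyEgyptian (MvPolynomial ℕ k) := by
  classical
  rintro ⟨f, hf, hE⟩
  obtain ⟨n, hn⟩ := Infinite.exists_notMem_finset f.vars
  -- the variable-shuffling equivalence
  set e₁ : Option ℕ ≃ ℕ := Denumerable.eqv (Option ℕ) with he₁
  set e : ℕ ≃ Option ℕ := (Equiv.swap n (e₁ none)).trans e₁.symm with he
  have hen : e n = none := by
    simp [he, Equiv.swap_apply_left]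
  -- localization facts
  have hMle : Submonoid.powers f ≤ nonZeroDivisors (MvPolynomial ℕ k) := by
    apply le_nonZeroDivisors_of_noZeroDivisors
    rintro ⟨m, hm⟩
    simp only at hm
    exact hf ((pow_eq_zero_iff' ).mp hm).1
  haveI : IsDomain (Localization.Away f) := IsLocalization.isDomain_localization hMle
  have hA : Function.Injective (algebraMap (MvPolynomial ℕ k) (Localization.Away f)) :=
    IsLocalization.injective (Localization.Away f) hMle
  have hphi : Function.Injective
      (algebraMap (Localization.Away f) (FractionRing (Localization.Away f))) :=
    IsFractionRing.injective (Localization.Away f) (FractionRing (Localization.Away f))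
  set psi : MvPolynomial ℕ k →+* FractionRing (Localization.Away f) :=
    (algebraMap (Localization.Away f) (FractionRing (Localization.Away f))).comp
      (algebraMap (MvPolynomial ℕ k) (Localization.Away f)) with hpsi
  have hpsiinj : Function.Injective psi := hphi.comp hA
  -- apply Egyptianness to X n
  have hXn : algebraMap (MvPolynomial ℕ k) (Localization.Away f) (X n) ≠ 0 := by
    intro h
    exact MvPolynomial.X_ne_zero n (hA (by rw [map_zero]; exact h))
  obtain ⟨s, hs0, hsum⟩ := hE (algebraMap (MvPolynomial ℕ k) (Localization.Away f) (X n)) hXn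
  have heq := hsum (FractionRing (Localization.Away f))
    (algebraMap (Localization.Away f) (FractionRing (Localization.Away f))) hphi
  -- choose numerators and denominators
  choose x y hxy using fun z : Localization.Away f =>
    (by obtain ⟨⟨a, b⟩, h⟩ := IsLocalization.mk'_surjective (M := Submonoid.powers f)
          (S := Localization.Away f) z
        exact ⟨a, b, h⟩ : ∃ (a : MvPolynomial ℕ k) (b : Submonoid.powers f),
          IsLocalization.mk' (Localization.Away f) a b = z)
  have hyD : ∀ z : Localization.Away f, ((y z : MvPolynomial ℕ k)) ≠ 0 :=
    fun z => nonZeroDivisors.ne_zero (hMle (y z).2)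
  have hspec : ∀ i : Localization.Away f,
      (algebraMap (Localization.Away f) (FractionRing (Localization.Away f))) i *
        psi (y i) = psi (x i) := by
    intro i
    have h1 := IsLocalization.mk'_spec (Localization.Away f) (x i) (y i)
    rw [hxy i] at h1
    have h2 := congrArg
      (algebraMap (Localization.Away f) (FractionRing (Localization.Away f))) h1
    rw [map_mul] at h2
    exact h2
  have hphine : ∀ i ∈ s,
      (algebraMap (Localization.Away f) (FractionRing (Localization.Away f))) i ≠ 0 := by
    intro i hi h
    exact hs0 i hi (hphi (by rw [map_zero]; exact h))
  have hxne : ∀ i ∈ s, x i ≠ 0 := by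
    intro i hi h
    have h2 := hspec i
    rw [h, map_zero] at h2
    rcases mul_eq_zero.mp h2 with h3 | h3
    · exact hphine i hi h3
    · exact hyD i (hpsiinj (by rw [map_zero]; exact h3))
  -- key equation in the polynomial ring
  have hDeq : X n * ∏ j ∈ s, x j
      = ∑ i ∈ s, (y i : MvPolynomial ℕ k) * ∏ j ∈ s.erase i, x j := by
    apply hpsiinj
    rw [map_mul, map_prod, map_sum]
    calc psi (X n) * ∏ j ∈ s, psi (x j)
        = (∑ i ∈ s,
            ((algebraMap (Localization.Away f) (FractionRing (Localization.Away f))) i)⁻¹) *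
            ∏ j ∈ s, psi (x j) := by
          rw [hpsi, RingHom.comp_apply, heq]
      _ = ∑ i ∈ s,
            ((algebraMap (Localization.Away f) (FractionRing (Localization.Away f))) i)⁻¹ *
            ∏ j ∈ s, psi (x j) := Finset.sum_mul ..
      _ = ∑ i ∈ s, psi ((y i : MvPolynomial ℕ k) * ∏ j ∈ s.erase i, x j) := by
          apply Finset.sum_congr rfl
          intro i hi
          rw [← Finset.mul_prod_erase s _ hi, ← hspec i, map_mul, map_prod,
            ← mul_assoc, ← mul_assoc, inv_mul_cancel₀ (hphine i hi), one_mul]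
  -- transfer to Polynomial via the equivalence
  set Phi : MvPolynomial ℕ k ≃ₐ[k] Polynomial (MvPolynomial ℕ k) :=
    (renameEquiv k e).trans (optionEquivLeft k ℕ) with hPhi
  have hPhiX : Phi (X n) = Polynomial.X := by
    simp [hPhi, renameEquiv_apply, rename_X, hen, optionEquivLeft_X_none]
  have hPhiinj : Function.Injective Phi := Phi.injective
  have hPhixne : ∀ j ∈ s, Phi (x j) ≠ 0 := by
    intro j hj h
    exact hxne j hj (hPhiinj (by rw [map_zero]; exact h))
  have hPeq := congrArg Phi hDeq
  rw [map_mul, map_prod, map_sum, hPhiX] at hPeq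
  set N := ∑ j ∈ s, (Phi (x j)).natDegree with hN
  have hL1 : (Polynomial.X * ∏ j ∈ s, Phi (x j)).natDegree = 1 + N := by
    rw [Polynomial.natDegree_mul Polynomial.X_ne_zero
      (Finset.prod_ne_zero_iff.mpr hPhixne), Polynomial.natDegree_X,
      Polynomial.natDegree_prod _ _ hPhixne]
  have hR1 : (∑ i ∈ s,
      Phi ((y i : MvPolynomial ℕ k) * ∏ j ∈ s.erase i, x j)).natDegree ≤ N := by
    apply Polynomial.natDegree_sum_le_of_forall_le
    intro i hi
    rw [map_mul, map_prod]
    obtain ⟨m, hm⟩ := (y i).2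
    obtain ⟨c, hc⟩ := psi_const e n hen (f ^ m) (fun hmem => hn (vars_pow f m hmem))
    have hPhiy : Phi ((y i : MvPolynomial ℕ k)) = Polynomial.C c := by
      simp only at hm
      rw [← hm]
      simpa [hPhi, renameEquiv_apply] using hc
    calc (Phi ((y i : MvPolynomial ℕ k)) * ∏ j ∈ s.erase i, Phi (x j)).natDegree
        ≤ (Phi ((y i : MvPolynomial ℕ k))).natDegree
            + (∏ j ∈ s.erase i, Phi (x j)).natDegree :=
          Polynomial.natDegree_mul_le
      _ ≤ 0 + ∑ j ∈ s.erase i, (Phi (x j)).natDegree := by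
          rw [hPhiy, Polynomial.natDegree_C]
          exact Nat.add_le_add_left (Polynomial.natDegree_prod_le ..) 0
      _ ≤ N := by
          rw [zero_add, hN]
          exact Finset.sum_le_sum_of_subset (Finset.erase_subset i s)
  rw [hPeq] at hL1
  omega
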